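/- For all real numbers d ≥ 2 and d_r ≥ 2, the equation d_r·((2 − 1/d)·x·e^{1/x} + x² − e^{2/x} − x²·e^{1/x}) = e^{2/x} has a unique solution x in the positive reals. -/

import Mathlib

noncomputable def Gfun (a : ℝ) : ℝ → ℝ := fun x =>
  a * x * Real.exp (-(1/x)) + x^2 * Real.exp (-(2/x)) - x^2 * Real.exp (-(1/x)) - 1

lemma key_ineq (t : ℝ) (ht : 0 ≤ t) :
    2 * Real.exp t ≤ 2 + 2*t + (3/2) * t^2 * Real.exp t := by
  rcases le_or_gt t 1 with h1 | h1
  · have hb := Real.exp_bound (n := 4) (by rw [abs_of_nonneg ht]; exact h1) (by norm_num)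
    rw [abs_of_nonneg ht] at hb
    have hub : Real.exp t ≤ 1 + t + t^2/2 + t^3/6 + t^4 * (5/96) := by
      have := abs_le.mp hb
      have hs : (∑ i ∈ Finset.range 4, t ^ i / (Nat.factorial i : ℝ))
          = 1 + t + t^2/2 + t^3/6 := by
        norm_num [Finset.sum_range_succ, Nat.factorial]
      rw [hs] at this
      have h2 := this.2
      norm_num [Nat.factorial] at h2
      nlinarith [h2]
    have hlb : 1 + t ≤ Real.exp t := by linarith [Real.add_one_le_exp t]
    nlinarith [sq_nonneg t, pow_le_one₀ ht h1 (n := 4), sq_nonneg (t - 1), mul_nonneg (mul_nonneg ht ht) ht]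
  · by_cases h2 : 2 ≤ (3/2) * t^2
    · nlinarith [Real.exp_pos t, mul_le_mul_of_nonneg_right h2 (le_of_lt (Real.exp_pos t))]
    · push_neg at h2
      have ht2 : t < 2 := by nlinarith
      have he2 : Real.exp t < 8 := by
        have h := Real.exp_one_lt_d9
        have : Real.exp t ≤ Real.exp 2 := Real.exp_le_exp.mpr (le_of_lt ht2)
        have he : Real.exp 2 = Real.exp 1 * Real.exp 1 := by
          rw [← Real.exp_add]; norm_num
        nlinarith [Real.exp_pos 1]
      nlinarith [Real.exp_pos t]

lemma key2 (x : ℝ) (hx : 0 < x) :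
    2*x ≤ 3/(2*x) + (2*x+2) * Real.exp (-(1/x)) := by
  have hx' : x ≠ 0 := ne_of_gt hx
  have h := key_ineq (1/x) (by positivity)
  have hu : 0 < Real.exp (1/x) := Real.exp_pos _
  rw [Real.exp_neg]
  set u := Real.exp (1/x) with hudef
  have h2 : 4*x^2*u ≤ 3*u + 4*x^2 + 4*x := by
    have h3 := mul_le_mul_of_nonneg_left h (show (0:ℝ) ≤ 2*x^2 by positivity)
    have h4 : 2*x^2*(2 + 2*(1/x) + 3/2*(1/x)^2*u) = 4*x^2 + 4*x + 3*u := by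
      field_simp
      ring
    have h5 : 2*x^2*(2*u) = 4*x^2*u := by ring
    linarith
  rw [← sub_nonneg]
  have heq : 3/(2*x) + (2*x+2) * u⁻¹ - 2*x
      = (3*u + 4*x^2 + 4*x - 4*x^2*u) * (2*x*u)⁻¹ := by
    field_simp
    ring
  rw [heq]
  have : 0 ≤ 3*u + 4*x^2 + 4*x - 4*x^2*u := by linarith
  positivity

lemma Gderiv (a x : ℝ) (hx : 0 < x) :
    HasDerivAt (Gfun a)
      (Real.exp (-(1/x)) * (a * (1 + 1/x) - (2*x+1)) + Real.exp (-(2/x)) * (2*x + 2)) x := by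
  have hx' : x ≠ 0 := ne_of_gt hx
  have h1 : HasDerivAt (fun y : ℝ => -(1/y)) (1/x^2) x := by
    simpa [one_div] using (hasDerivAt_inv hx').fun_neg
  have h2 : HasDerivAt (fun y : ℝ => -(2/y)) (2/x^2) x := by
    have h := h1.const_mul (2:ℝ)
    have he : (fun y : ℝ => -(2/y)) = (fun y : ℝ => 2 * -(1/y)) := by funext y; ring
    rw [he]
    exact h.congr_deriv (by ring)
  have hE : HasDerivAt (fun y : ℝ => Real.exp (-(1/y)))
      (Real.exp (-(1/x)) * (1/x^2)) x := h1.exp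
  have hE2 : HasDerivAt (fun y : ℝ => Real.exp (-(2/y)))
      (Real.exp (-(2/x)) * (2/x^2)) x := h2.exp
  have hlin : HasDerivAt (fun y : ℝ => a * y) a x := by
    simpa using (hasDerivAt_id x).const_mul a
  have ht1 : HasDerivAt (fun y : ℝ => a * y * Real.exp (-(1/y)))
      (a * Real.exp (-(1/x)) + a * x * (Real.exp (-(1/x)) * (1/x^2))) x := hlin.mul hE
  have hpow : HasDerivAt (fun y : ℝ => y^2) (2*x) x := by
    simpa using hasDerivAt_pow 2 x
  have ht2 : HasDerivAt (fun y : ℝ => y^2 * Real.exp (-(2/y)))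
      (2*x * Real.exp (-(2/x)) + x^2 * (Real.exp (-(2/x)) * (2/x^2))) x := hpow.mul hE2
  have ht3 : HasDerivAt (fun y : ℝ => y^2 * Real.exp (-(1/y)))
      (2*x * Real.exp (-(1/x)) + x^2 * (Real.exp (-(1/x)) * (1/x^2))) x := hpow.mul hE
  have := ((ht1.add ht2).sub ht3).sub_const 1
  refine this.congr_deriv ?_
  field_simp
  ring

lemma Gmono (a : ℝ) (ha : 3/2 ≤ a) : StrictMonoOn (Gfun a) (Set.Ioi 0) := by
  apply strictMonoOn_of_deriv_pos (convex_Ioi 0)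
  · intro x hx
    exact (Gderiv a x hx).continuousAt.continuousWithinAt
  · intro x hx
    rw [interior_Ioi] at hx
    have hx : (0:ℝ) < x := hx
    rw [(Gderiv a x hx).deriv]
    have hE : 0 < Real.exp (-(1/x)) := Real.exp_pos _
    have hsq : Real.exp (-(2/x)) = Real.exp (-(1/x)) * Real.exp (-(1/x)) := by
      rw [← Real.exp_add]; congr 1; ring
    rw [hsq]
    have hk := key2 x hx
    have ha2 : (3/2) * (1 + 1/x) ≤ a * (1 + 1/x) := by
      apply mul_le_mul_of_nonneg_right ha
      positivity
    have hexp : (3:ℝ)/2 * (1 + 1/x) = 3/2 + 3/(2*x) := by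
      field_simp
    have hinner : 0 < a * (1 + 1/x) - (2*x+1) + Real.exp (-(1/x)) * (2*x + 2) := by
      nlinarith
    nlinarith [mul_pos hE hinner]

lemma Glow (a : ℝ) (ha : 0 ≤ a) (ha2 : a ≤ 2) : Gfun a (1/2) < 0 := by
  have h1 : Gfun a (1/2) = a * (1/2) * Real.exp (-2) + (1/4) * Real.exp (-4)
      - (1/4) * Real.exp (-2) - 1 := by
    unfold Gfun
    norm_num
  rw [h1]
  have he2 : Real.exp (-2) ≤ 1/3 := by
    rw [Real.exp_neg]
    rw [inv_le_comm₀ (Real.exp_pos 2) (by norm_num)]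
    linarith [Real.add_one_le_exp 2]
  have he4 : Real.exp (-4) ≤ 1/5 := by
    rw [Real.exp_neg]
    rw [inv_le_comm₀ (Real.exp_pos 4) (by norm_num)]
    linarith [Real.add_one_le_exp 4]
  have hp2 : 0 < Real.exp (-2) := Real.exp_pos _
  have hp4 : 0 < Real.exp (-4) := Real.exp_pos _
  nlinarith

lemma Ghigh (a : ℝ) (ha : 3/2 ≤ a) : 1 ≤ Gfun a 7 := by
  have h1 : Gfun a 7 = a * 7 * Real.exp (-(1/7)) + 49 * Real.exp (-(2/7))
      - 49 * Real.exp (-(1/7)) - 1 := by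
    unfold Gfun
    norm_num
  rw [h1]
  have hsq : Real.exp (-(2/7)) = Real.exp (-(1/7)) * Real.exp (-(1/7)) := by
    rw [← Real.exp_add]; congr 1; ring
  rw [hsq]
  set u := Real.exp (-(1/7)) with hu
  have h6 : 6/7 ≤ u := by
    have := Real.add_one_le_exp (-(1/7))
    linarith
  have hupos : 0 < u := Real.exp_pos _
  nlinarith [sq_nonneg (u - 6/7), mul_le_mul_of_nonneg_right ha (le_of_lt hupos)]

/-- For all reals `d ≥ 2` and `d_r ≥ 2`, the equation defining `Ξ_{d_r}` has a
unique positive real solution. -/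
theorem xi_exists_unique (d dr : ℝ) (hd : 2 ≤ d) (hdr : 2 ≤ dr) :
    ∃! x : ℝ, 0 < x ∧
      dr * ((2 - 1 / d) * x * Real.exp (1 / x) + x ^ 2 - Real.exp (2 / x)
        - x ^ 2 * Real.exp (1 / x)) = Real.exp (2 / x) := by
  have hd0 : (0:ℝ) < d := by linarith
  have hdr0 : (0:ℝ) < dr := by linarith
  set a : ℝ := 2 - 1/d with hadef
  have ha1 : 3/2 ≤ a := by
    have : 1/d ≤ 1/2 := by
      rw [div_le_div_iff₀ hd0 (by norm_num)]; linarith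
    simp only [hadef]; linarith
  have ha2 : a ≤ 2 := by
    have : 0 < 1/d := by positivity
    simp only [hadef]; linarith
  -- equivalence between the equation and `Gfun a x = 1/dr`
  have hiff : ∀ x : ℝ, 0 < x →
      (dr * ((2 - 1 / d) * x * Real.exp (1 / x) + x ^ 2 - Real.exp (2 / x)
        - x ^ 2 * Real.exp (1 / x)) = Real.exp (2 / x) ↔ Gfun a x = 1/dr) := by
    intro x hx
    have hv : 0 < Real.exp (1/x) := Real.exp_pos _
    have h2v : Real.exp (2/x) = Real.exp (1/x) * Real.exp (1/x) := by
      rw [← Real.exp_add]; congr 1; ring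
    have hneg : Real.exp (-(1/x)) = (Real.exp (1/x))⁻¹ := Real.exp_neg _
    have hneg2 : Real.exp (-(2/x)) = (Real.exp (1/x) * Real.exp (1/x))⁻¹ := by
      rw [Real.exp_neg, h2v]
    have haa : (2 - 1/d) = a := hadef.symm
    rw [haa]
    have hGx : Gfun a x = (a * x * Real.exp (1/x) + x^2
        - Real.exp (1/x) * Real.exp (1/x)
        - x^2 * Real.exp (1/x)) / (Real.exp (1/x) * Real.exp (1/x)) := by
      unfold Gfun
      rw [hneg, hneg2]
      field_simp
      ring
    rw [hGx]
    rw [div_eq_div_iff (mul_ne_zero hv.ne' hv.ne') hdr0.ne']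
    rw [h2v]
    constructor
    · intro h
      linear_combination h
    · intro h
      linear_combination h
  -- continuity and monotonicity
  have hmono := Gmono a ha1
  have hcont : ContinuousOn (Gfun a) (Set.Icc (1/2) 7) := by
    intro y hy
    have hy0 : (0:ℝ) < y := lt_of_lt_of_le (by norm_num) hy.1
    exact (Gderiv a y hy0).continuousAt.continuousWithinAt
  have hdr12 : 1/dr ≤ 1/2 := by
    rw [div_le_div_iff₀ hdr0 (by norm_num)]; linarith
  have hdrpos : 0 < 1/dr := by positivity
  have hmem : 1/dr ∈ Set.Icc (Gfun a (1/2)) (Gfun a 7) := by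
    constructor
    · linarith [Glow a (le_trans (by norm_num) ha1) ha2]
    · linarith [Ghigh a ha1]
  obtain ⟨c, hcIcc, hGc⟩ := intermediate_value_Icc (by norm_num : (1/2:ℝ) ≤ 7) hcont hmem
  have hcpos : 0 < c := lt_of_lt_of_le (by norm_num) hcIcc.1
  refine ⟨c, ⟨hcpos, (hiff c hcpos).mpr hGc⟩, ?_⟩
  rintro y ⟨hy, heq⟩
  have hGy : Gfun a y = 1/dr := (hiff y hy).mp heq
  exact hmono.injOn hy hcpos (hGy.trans hGc.symm)
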